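/- Energy dissipation identity for the Schrödinger–Langevin equation: let ψ ∈ C([0,T); H²(𝕋)) solve i∂_tψ + (1/2)∂_x²ψ = f'(|ψ|²)ψ + (1/τ)Sψ + Vψ, with S the phase function satisfying ∂_x S = Im(∂_xψ/ψ) and V solving −∂_x²V = |ψ|² − C(x). Then the energy E(t) = ∫_𝕋 (1/2)|∂_xψ|² + f(|ψ|²) + (1/2)(∂_xV)² dx satisfies E(t) + (1/τ)∫₀ᵗ∫_𝕋 ρ v² dx ds = E(0), where ρ = |ψ|², v = Im(∂_xψ/ψ). -/

import Mathlib

open Real Complex MeasureTheory intervalIntegral Set Filter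

noncomputable section SLhelpers
variable {E : Type*} [NormedAddCommGroup E] [NormedSpace ℝ E]

/-- partial derivative in the second (space) variable -/
noncomputable def pdX (F : ℝ × ℝ → E) (p : ℝ × ℝ) : E := fderiv ℝ F p (0, 1)
/-- partial derivative in the first (time) variable -/
noncomputable def pdT (F : ℝ × ℝ → E) (p : ℝ × ℝ) : E := fderiv ℝ F p (1, 0)

lemma sliceX (F : ℝ × ℝ → E) (hF : Differentiable ℝ F) (t x : ℝ) :
    HasDerivAt (fun y => F (t, y)) (pdX F (t, x)) x :=
  (hF (t, x)).hasFDerivAt.comp_hasDerivAt x ((hasDerivAt_const x t).prodMk (hasDerivAt_id x))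

lemma sliceT (F : ℝ × ℝ → E) (hF : Differentiable ℝ F) (t x : ℝ) :
    HasDerivAt (fun s => F (s, x)) (pdT F (t, x)) t :=
  (hF (t, x)).hasFDerivAt.comp_hasDerivAt t ((hasDerivAt_id t).prodMk (hasDerivAt_const t x))

lemma contPD (F : ℝ × ℝ → E) (hF : ContDiff ℝ 1 F) (v : ℝ × ℝ) :
    Continuous (fun p => fderiv ℝ F p v) := by
  have h := hF.continuous_fderiv one_ne_zero
  exact isBoundedBilinearMap_apply.continuous.comp (h.prodMk continuous_const)

lemma contPDX (F : ℝ × ℝ → E) (hF : ContDiff ℝ 1 F) : Continuous (pdX F) :=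
  contPD F hF _

lemma contPDT (F : ℝ × ℝ → E) (hF : ContDiff ℝ 1 F) : Continuous (pdT F) :=
  contPD F hF _

lemma contDiffPD (F : ℝ × ℝ → E) (hF : ContDiff ℝ 2 F) (v : ℝ × ℝ) :
    ContDiff ℝ 1 (fun p => fderiv ℝ F p v) := by
  have h : ContDiff ℝ 1 (fderiv ℝ F) := hF.fderiv_right (by norm_num)
  exact (ContinuousLinearMap.apply ℝ E v).contDiff.comp h

lemma contDiffPDX (F : ℝ × ℝ → E) (hF : ContDiff ℝ 2 F) : ContDiff ℝ 1 (pdX F) :=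
  contDiffPD F hF _

lemma contDiffPDT (F : ℝ × ℝ → E) (hF : ContDiff ℝ 2 F) : ContDiff ℝ 1 (pdT F) :=
  contDiffPD F hF _

lemma pd_fderiv (F : ℝ × ℝ → E) (hF : ContDiff ℝ 2 F) (v w : ℝ × ℝ) (p : ℝ × ℝ) :
    fderiv ℝ (fun q => fderiv ℝ F q v) p w = fderiv ℝ (fderiv ℝ F) p w v := by
  have h : ContDiff ℝ 1 (fderiv ℝ F) := hF.fderiv_right (by norm_num)
  have e : (fun q => fderiv ℝ F q v) = (ContinuousLinearMap.apply ℝ E v) ∘ (fderiv ℝ F) := rfl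
  rw [e, fderiv_comp _ (ContinuousLinearMap.apply ℝ E v).differentiableAt
    (h.differentiable one_ne_zero p)]
  simp

/-- Clairaut: `∂ₜ∂ₓF = ∂ₓ∂ₜF` for `C²` functions. -/
lemma clairaut (F : ℝ × ℝ → E) (hF : ContDiff ℝ 2 F) (p : ℝ × ℝ) :
    pdT (pdX F) p = pdX (pdT F) p := by
  show fderiv ℝ (fun q => fderiv ℝ F q (0,1)) p (1,0)
      = fderiv ℝ (fun q => fderiv ℝ F q (1,0)) p (0,1)
  rw [pd_fderiv F hF _ _ p, pd_fderiv F hF _ _ p]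
  exact (hF.contDiffAt.isSymmSndFDerivAt (by norm_num)).eq _ _

/-- spatial periodicity is inherited by the full derivative -/
lemma fderiv_periodic (F : ℝ × ℝ → E) (hF : Differentiable ℝ F)
    (hper : ∀ t x, F (t, x + 1) = F (t, x)) (t x : ℝ) :
    fderiv ℝ F (t, x + 1) = fderiv ℝ F (t, x) := by
  have hTr : HasFDerivAt (fun p : ℝ × ℝ => p + ((0:ℝ), (1:ℝ)))
      (ContinuousLinearMap.id ℝ (ℝ × ℝ)) (t, x) := (hasFDerivAt_id _).add_const _
  have hcomp : HasFDerivAt (fun p : ℝ × ℝ => F (p + ((0:ℝ), (1:ℝ))))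
      ((fderiv ℝ F ((t, x) + ((0:ℝ),(1:ℝ)))).comp (ContinuousLinearMap.id ℝ (ℝ × ℝ))) (t, x) :=
    (hF _).hasFDerivAt.comp _ hTr
  have hfe : (fun p : ℝ × ℝ => F (p + ((0:ℝ), (1:ℝ)))) = F := by
    funext p
    have : p + ((0:ℝ), (1:ℝ)) = (p.1, p.2 + 1) := by
      cases p; simp [Prod.ext_iff]
    rw [this, hper]
  rw [hfe] at hcomp
  have := hcomp.unique (hF _).hasFDerivAt
  have h2 : ((t, x) + ((0:ℝ),(1:ℝ))) = ((t : ℝ), x + 1) := by simp [Prod.ext_iff]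
  rw [h2, ContinuousLinearMap.comp_id] at this
  exact this

lemma pdX_periodic (F : ℝ × ℝ → E) (hF : Differentiable ℝ F)
    (hper : ∀ t x, F (t, x + 1) = F (t, x)) (t x : ℝ) :
    pdX F (t, x + 1) = pdX F (t, x) := by
  unfold pdX; rw [fderiv_periodic F hF hper]

lemma pdT_periodic (F : ℝ × ℝ → E) (hF : Differentiable ℝ F)
    (hper : ∀ t x, F (t, x + 1) = F (t, x)) (t x : ℝ) :
    pdT F (t, x + 1) = pdT F (t, x) := by
  unfold pdT; rw [fderiv_periodic F hF hper]

/-- derivative of `s ↦ re (conj (u s) * w s)` -/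
lemma HasDerivAt.conj_mul_re {u w : ℝ → ℂ} {u' w' : ℂ} {t : ℝ}
    (hu : HasDerivAt u u' t) (hw : HasDerivAt w w' t) :
    HasDerivAt (fun s => ((starRingEnd ℂ) (u s) * w s).re)
      (((starRingEnd ℂ) u' * w t).re + ((starRingEnd ℂ) (u t) * w').re) t := by
  have hur : HasDerivAt (fun s => (u s).re) u'.re t :=
    Complex.reCLM.hasFDerivAt.comp_hasDerivAt t hu
  have hui : HasDerivAt (fun s => (u s).im) u'.im t :=
    Complex.imCLM.hasFDerivAt.comp_hasDerivAt t hu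
  have hwr : HasDerivAt (fun s => (w s).re) w'.re t :=
    Complex.reCLM.hasFDerivAt.comp_hasDerivAt t hw
  have hwi : HasDerivAt (fun s => (w s).im) w'.im t :=
    Complex.imCLM.hasFDerivAt.comp_hasDerivAt t hw
  have h : HasDerivAt (fun s => (u s).re * (w s).re + (u s).im * (w s).im) _ t :=
    (hur.mul hwr).add (hui.mul hwi)
  have he : (fun s => (u s).re * (w s).re + (u s).im * (w s).im)
      = fun s => ((starRingEnd ℂ) (u s) * w s).re := by
    funext s; simp [Complex.mul_re]; try ring
  rw [he] at h
  convert h using 1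
  simp [Complex.mul_re]; try ring

/-- derivative of `s ↦ im (conj (u s) * w s)` -/
lemma HasDerivAt.conj_mul_im {u w : ℝ → ℂ} {u' w' : ℂ} {t : ℝ}
    (hu : HasDerivAt u u' t) (hw : HasDerivAt w w' t) :
    HasDerivAt (fun s => ((starRingEnd ℂ) (u s) * w s).im)
      (((starRingEnd ℂ) u' * w t).im + ((starRingEnd ℂ) (u t) * w').im) t := by
  have hur : HasDerivAt (fun s => (u s).re) u'.re t :=
    Complex.reCLM.hasFDerivAt.comp_hasDerivAt t hu
  have hui : HasDerivAt (fun s => (u s).im) u'.im t :=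
    Complex.imCLM.hasFDerivAt.comp_hasDerivAt t hu
  have hwr : HasDerivAt (fun s => (w s).re) w'.re t :=
    Complex.reCLM.hasFDerivAt.comp_hasDerivAt t hw
  have hwi : HasDerivAt (fun s => (w s).im) w'.im t :=
    Complex.imCLM.hasFDerivAt.comp_hasDerivAt t hw
  have h : HasDerivAt (fun s => (u s).re * (w s).im - (u s).im * (w s).re) _ t :=
    (hur.mul hwi).sub (hui.mul hwr)
  have he : (fun s => (u s).re * (w s).im - (u s).im * (w s).re)
      = fun s => ((starRingEnd ℂ) (u s) * w s).im := by
    funext s; simp [Complex.mul_im]; try ring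
  rw [he] at h
  convert h using 1
  simp [Complex.mul_im]; try ring

/-- derivative of `s ↦ normSq (u s)` -/
lemma HasDerivAt.normSq' {u : ℝ → ℂ} {u' : ℂ} {t : ℝ} (hu : HasDerivAt u u' t) :
    HasDerivAt (fun s => Complex.normSq (u s)) (2 * ((starRingEnd ℂ) (u t) * u').re) t := by
  have h := hu.conj_mul_re hu
  have he : (fun s => ((starRingEnd ℂ) (u s) * u s).re) = fun s => Complex.normSq (u s) := by
    funext s; simp [Complex.normSq_apply, Complex.mul_re]
  rw [he] at h
  convert h using 1
  simp [Complex.mul_re]; try ring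

end SLhelpers

lemma integral_deriv_eq_zero (u u' : ℝ → ℝ) (h : ∀ x, HasDerivAt u (u' x) x)
    (hc : Continuous u') (hper : u 1 = u 0) : ∫ x in (0:ℝ)..1, u' x = 0 := by
  rw [intervalIntegral.integral_eq_sub_of_hasDerivAt (fun x _ => h x)
    (hc.intervalIntegrable 0 1), hper, sub_self]

lemma continuous_param_integral (g : ℝ × ℝ → ℝ) (hg : Continuous g) :
    Continuous fun s => ∫ x in (0:ℝ)..1, g (s, x) := by
  rw [continuous_iff_continuousAt]
  intro t
  have : ∀ s, ∫ x in (0:ℝ)..1, g (s, x) = ∫ x in Set.Ioc (0:ℝ) 1, g (s, x) := fun s => by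
    rw [intervalIntegral.integral_of_le zero_le_one]
  simp_rw [this]
  obtain ⟨M, hM⟩ := (isCompact_Icc.prod isCompact_Icc :
      IsCompact (Set.Icc (t-1) (t+1) ×ˢ Set.Icc (0:ℝ) 1)).exists_bound_of_continuousOn
      hg.continuousOn
  apply MeasureTheory.continuousAt_of_dominated (bound := fun _ => M)
  · exact Filter.Eventually.of_forall fun s =>
      (hg.comp (continuous_const.prodMk continuous_id)).aestronglyMeasurable
  · filter_upwards [Metric.ball_mem_nhds t one_pos] with s hs
    filter_upwards [MeasureTheory.ae_restrict_mem measurableSet_Ioc] with x hx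
    have : (s, x) ∈ Set.Icc (t-1) (t+1) ×ˢ Set.Icc (0:ℝ) 1 := by
      constructor
      · have := Metric.mem_ball.mp hs
        rw [Real.dist_eq] at this
        constructor <;> [linarith [abs_lt.mp this]; linarith [(abs_lt.mp this).2]]
      · exact ⟨le_of_lt hx.1, hx.2⟩
    exact hM _ this
  · exact MeasureTheory.integrable_const M
  · filter_upwards [MeasureTheory.ae_restrict_mem measurableSet_Ioc] with x _
    exact (hg.comp (continuous_id.prodMk continuous_const)).continuousAt

lemma hasDerivAt_param_integral (g g' : ℝ × ℝ → ℝ) (hg : Continuous g) (hg' : Continuous g')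
    (hder : ∀ p : ℝ × ℝ, HasDerivAt (fun s => g (s, p.2)) (g' p) p.1) (t : ℝ) :
    HasDerivAt (fun s => ∫ x in (0:ℝ)..1, g (s, x)) (∫ x in (0:ℝ)..1, g' (t, x)) t := by
  obtain ⟨M, hM⟩ := (isCompact_Icc.prod isCompact_Icc :
      IsCompact (Set.Icc (t-1) (t+1) ×ˢ Set.Icc (0:ℝ) 1)).exists_bound_of_continuousOn
      hg'.continuousOn
  have := intervalIntegral.hasDerivAt_integral_of_dominated_loc_of_deriv_le
    (F := fun s x => g (s, x)) (F' := fun s x => g' (s, x)) (a := (0:ℝ)) (b := 1)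
    (bound := fun _ => M) (s := Metric.ball t 1) (x₀ := t) (μ := MeasureTheory.volume) (Metric.ball_mem_nhds t one_pos) ?_ ?_ ?_ ?_ ?_ ?_
  · exact this.2
  · exact Filter.Eventually.of_forall fun s =>
      (hg.comp (continuous_const.prodMk continuous_id)).aestronglyMeasurable
  · exact (hg.comp (continuous_const.prodMk continuous_id)).intervalIntegrable 0 1
  · exact (hg'.comp (continuous_const.prodMk continuous_id)).aestronglyMeasurable
  · filter_upwards with x hx s hs
    apply hM
    constructor
    · have := Metric.mem_ball.mp hs
      rw [Real.dist_eq] at this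
      constructor <;> [linarith [abs_lt.mp this]; linarith [(abs_lt.mp this).2]]
    · rw [Set.uIoc_of_le (zero_le_one' ℝ)] at hx
      exact ⟨le_of_lt hx.1, hx.2⟩
  · exact intervalIntegrable_const
  · filter_upwards with x _ s _
    exact hder (s, x)
theorem schrodinger_langevin_energy_dissipation
    (T τ δ : ℝ) (hT : 0 < T) (hτ : 0 < τ) (hδ : 0 < δ)
    (f : ℝ → ℝ) (hf : ContDiff ℝ 2 f) (hf0 : ∀ s, 0 ≤ f s)
    (Cfun : ℝ → ℝ) (hC : Continuous Cfun) (hCper : Function.Periodic Cfun 1)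
    (ψ : ℝ → ℝ → ℂ) (S V : ℝ → ℝ → ℝ)
    (hψ : ContDiff ℝ 2 (fun q : ℝ × ℝ => ψ q.1 q.2))
    (hS : ContDiff ℝ 2 (fun q : ℝ × ℝ => S q.1 q.2))
    (hV : ContDiff ℝ 2 (fun q : ℝ × ℝ => V q.1 q.2))
    (hψper : ∀ t x, ψ t (x + 1) = ψ t x)
    (hVper : ∀ t x, V t (x + 1) = V t x)
    (hpos : ∀ t x, δ ≤ (‖ψ t x‖) ^ 2)
    (hmass : (∫ x in (0:ℝ)..1, Cfun x) = ∫ x in (0:ℝ)..1, (‖ψ 0 x‖) ^ 2)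
    (heq : ∀ t ∈ Set.Ico (0:ℝ) T, ∀ x : ℝ,
      Complex.I * deriv (fun s => ψ s x) t
          + (1/2) * deriv (deriv (fun y => ψ t y)) x
        = Complex.ofReal (deriv f ((‖ψ t x‖) ^ 2)) * ψ t x
            + (1/τ : ℂ) * (S t x : ℂ) * ψ t x + (V t x : ℂ) * ψ t x)
    (hSgrad : ∀ t ∈ Set.Ico (0:ℝ) T, ∀ x : ℝ,
      deriv (fun y => S t y) x = (deriv (fun y => ψ t y) x / ψ t x).im)
    (hPoisson : ∀ t ∈ Set.Ico (0:ℝ) T, ∀ x : ℝ,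
      -(deriv (deriv (fun y => V t y)) x) = (‖ψ t x‖) ^ 2 - Cfun x)
    (hVmean : ∀ t ∈ Set.Ico (0:ℝ) T, (∫ x in (0:ℝ)..1, V t x) = 0) :
    ∀ t ∈ Set.Ico (0:ℝ) T,
      (∫ x in (0:ℝ)..1,
          ((1/2) * (‖deriv (fun y => ψ t y) x‖) ^ 2
            + f ((‖ψ t x‖) ^ 2)
            + (1/2) * (deriv (fun y => V t y) x) ^ 2))
        + (1/τ) * ∫ s in (0:ℝ)..t, ∫ x in (0:ℝ)..1,
            (‖ψ s x‖) ^ 2 * ((deriv (fun y => ψ s y) x / ψ s x).im) ^ 2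
      = ∫ x in (0:ℝ)..1,
          ((1/2) * (‖deriv (fun y => ψ 0 y) x‖) ^ 2
            + f ((‖ψ 0 x‖) ^ 2)
            + (1/2) * (deriv (fun y => V 0 y) x) ^ 2) := by
  classical
  -- uncurried fields
  set Ψ : ℝ × ℝ → ℂ := fun q => ψ q.1 q.2 with hΨdef
  set Sf : ℝ × ℝ → ℝ := fun q => S q.1 q.2 with hSfdef
  set Vf : ℝ × ℝ → ℝ := fun q => V q.1 q.2 with hVfdef
  have hΨ2 : ContDiff ℝ 2 Ψ := hψ
  have hS2 : ContDiff ℝ 2 Sf := hS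
  have hV2 : ContDiff ℝ 2 Vf := hV
  have hΨd : Differentiable ℝ Ψ := hΨ2.differentiable two_ne_zero
  have hSd : Differentiable ℝ Sf := hS2.differentiable two_ne_zero
  have hVd : Differentiable ℝ Vf := hV2.differentiable two_ne_zero
  have hXd : Differentiable ℝ (pdX Ψ) := (contDiffPDX Ψ hΨ2).differentiable one_ne_zero
  have hTd : Differentiable ℝ (pdT Ψ) := (contDiffPDT Ψ hΨ2).differentiable one_ne_zero
  have hVXd : Differentiable ℝ (pdX Vf) := (contDiffPDX Vf hV2).differentiable one_ne_zero
  have hVTd : Differentiable ℝ (pdT Vf) := (contDiffPDT Vf hV2).differentiable one_ne_zero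
  -- rewriting `deriv`s as partial derivatives
  have hDx : ∀ s x, deriv (fun y => ψ s y) x = pdX Ψ (s, x) :=
    fun s x => (sliceX Ψ hΨd s x).deriv
  have hDt : ∀ s x, deriv (fun r => ψ r x) s = pdT Ψ (s, x) :=
    fun s x => (sliceT Ψ hΨd s x).deriv
  have hDVx : ∀ s x, deriv (fun y => V s y) x = pdX Vf (s, x) :=
    fun s x => (sliceX Vf hVd s x).deriv
  have hDSx : ∀ s x, deriv (fun y => S s y) x = pdX Sf (s, x) :=
    fun s x => (sliceX Sf hSd s x).deriv
  have hDxx : ∀ s x, deriv (deriv (fun y => ψ s y)) x = pdX (pdX Ψ) (s, x) := by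
    intro s x
    have h1 : deriv (fun y => ψ s y) = fun y => pdX Ψ (s, y) := funext fun y => hDx s y
    rw [h1]
    exact (sliceX (pdX Ψ) hXd s x).deriv
  have hDVxx : ∀ s x, deriv (deriv (fun y => V s y)) x = pdX (pdX Vf) (s, x) := by
    intro s x
    have h1 : deriv (fun y => V s y) = fun y => pdX Vf (s, y) := funext fun y => hDVx s y
    rw [h1]
    exact (sliceX (pdX Vf) hVXd s x).deriv
  -- nonvanishing
  have hne : ∀ p : ℝ × ℝ, Ψ p ≠ 0 := by
    intro p h0
    have h1 := hpos p.1 p.2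
    have h2 : ψ p.1 p.2 = Ψ p := rfl
    rw [h2, h0] at h1
    simp at h1
    linarith
  have hnsq : ∀ p : ℝ × ℝ, Complex.normSq (Ψ p) ≠ 0 := fun p => by
    simp [Complex.normSq_eq_zero, hne p]
  -- rewritten hypotheses
  have heq' : ∀ s ∈ Set.Ico (0:ℝ) T, ∀ x : ℝ,
      pdX (pdX Ψ) (s, x) = 2 * ((Complex.ofReal (deriv f (Complex.normSq (Ψ (s, x)))) * Ψ (s, x)
        + (1/τ : ℂ) * (Sf (s, x) : ℂ) * Ψ (s, x) + (Vf (s, x) : ℂ) * Ψ (s, x))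
        - Complex.I * pdT Ψ (s, x)) := by
    intro s hs x
    have h := heq s hs x
    rw [hDt, hDxx, Complex.sq_norm] at h
    have h2 : (‖ψ s x‖ : ℝ) ^ 2 = Complex.normSq (Ψ (s, x)) := Complex.sq_norm _
    linear_combination 2 * h
  have hPoisson' : ∀ s ∈ Set.Ico (0:ℝ) T, ∀ x : ℝ,
      pdX (pdX Vf) (s, x) = Cfun x - Complex.normSq (Ψ (s, x)) := by
    intro s hs x
    have h := hPoisson s hs x
    rw [hDVxx, Complex.sq_norm] at h
    linarith
  have hSx : ∀ s ∈ Set.Ico (0:ℝ) T, ∀ x : ℝ,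
      pdX Sf (s, x) = (pdX Ψ (s, x) / Ψ (s, x)).im := by
    intro s hs x
    have h := hSgrad s hs x
    rw [hDSx, hDx] at h
    exact h
  -- periodicity of fields
  have hΨper : ∀ t x, Ψ (t, x + 1) = Ψ (t, x) := fun t x => hψper t x
  have hVfper : ∀ t x, Vf (t, x + 1) = Vf (t, x) := fun t x => hVper t x
  have hperX : ∀ t x, pdX Ψ (t, x + 1) = pdX Ψ (t, x) := pdX_periodic Ψ hΨd hΨper
  have hperT : ∀ t x, pdT Ψ (t, x + 1) = pdT Ψ (t, x) := pdT_periodic Ψ hΨd hΨper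
  have hperXX : ∀ t x, pdX (pdX Ψ) (t, x + 1) = pdX (pdX Ψ) (t, x) :=
    pdX_periodic (pdX Ψ) hXd hperX
  have hperVX : ∀ t x, pdX Vf (t, x + 1) = pdX Vf (t, x) := pdX_periodic Vf hVd hVfper
  have hperVT : ∀ t x, pdT Vf (t, x + 1) = pdT Vf (t, x) := pdT_periodic Vf hVd hVfper
  -- derived real fields
  set ρt : ℝ × ℝ → ℝ := fun p => 2 * ((starRingEnd ℂ) (Ψ p) * pdT Ψ p).re with hρtdef
  set Jf : ℝ × ℝ → ℝ := fun p => ((starRingEnd ℂ) (Ψ p) * pdX Ψ p).im with hJfdef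
  set vf : ℝ × ℝ → ℝ := fun p => (pdX Ψ p / Ψ p).im with hvfdef
  set df : ℝ × ℝ → ℝ := fun p => Complex.normSq (Ψ p) * vf p ^ 2 with hdfdef
  set ef : ℝ × ℝ → ℝ := fun p => 1/2 * Complex.normSq (pdX Ψ p)
    + f (Complex.normSq (Ψ p)) + 1/2 * pdX Vf p ^ 2 with hefdef
  set etf : ℝ × ℝ → ℝ := fun p => ((starRingEnd ℂ) (pdX Ψ p) * pdT (pdX Ψ) p).re
    + deriv f (Complex.normSq (Ψ p)) * ρt p + pdX Vf p * pdT (pdX Vf) p with hetfdef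
  -- continuity of everything
  have hcΨ : Continuous Ψ := hΨ2.continuous
  have hcS : Continuous Sf := hS2.continuous
  have hcV : Continuous Vf := hV2.continuous
  have hcX : Continuous (pdX Ψ) := contPDX Ψ (hΨ2.of_le one_le_two)
  have hcT : Continuous (pdT Ψ) := contPDT Ψ (hΨ2.of_le one_le_two)
  have hcXX : Continuous (pdX (pdX Ψ)) := contPDX (pdX Ψ) (contDiffPDX Ψ hΨ2)
  have hcTX : Continuous (pdT (pdX Ψ)) := contPDT (pdX Ψ) (contDiffPDX Ψ hΨ2)
  have hcXT : Continuous (pdX (pdT Ψ)) := contPDX (pdT Ψ) (contDiffPDT Ψ hΨ2)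
  have hcVX : Continuous (pdX Vf) := contPDX Vf (hV2.of_le one_le_two)
  have hcVT : Continuous (pdT Vf) := contPDT Vf (hV2.of_le one_le_two)
  have hcVXX : Continuous (pdX (pdX Vf)) := contPDX (pdX Vf) (contDiffPDX Vf hV2)
  have hcVTX : Continuous (pdT (pdX Vf)) := contPDT (pdX Vf) (contDiffPDX Vf hV2)
  have hcVXT : Continuous (pdX (pdT Vf)) := contPDX (pdT Vf) (contDiffPDT Vf hV2)
  have hcSX : Continuous (pdX Sf) := contPDX Sf (hS2.of_le one_le_two)
  have hcf' : Continuous (deriv f) := hf.continuous_deriv one_le_two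
  have hconj : Continuous (starRingEnd ℂ) := Complex.continuous_conj
  have hcρt : Continuous ρt := by
    exact (continuous_const.mul (Complex.continuous_re.comp
      (((hconj.comp hcΨ)).mul hcT)))
  have hcJ : Continuous Jf :=
    Complex.continuous_im.comp ((hconj.comp hcΨ).mul hcX)
  have hcv : Continuous vf :=
    Complex.continuous_im.comp (hcX.div hcΨ hne)
  have hcd : Continuous df :=
    (Complex.continuous_normSq.comp hcΨ).mul (hcv.pow 2)
  have hce : Continuous ef :=
    ((continuous_const.mul (Complex.continuous_normSq.comp hcX)).add
      (hf.continuous.comp (Complex.continuous_normSq.comp hcΨ))).add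
      (continuous_const.mul (hcVX.pow 2))
  have hcet : Continuous etf :=
    ((Complex.continuous_re.comp ((hconj.comp hcX).mul hcTX)).add
      ((hcf'.comp (Complex.continuous_normSq.comp hcΨ)).mul hcρt)).add
      (hcVX.mul hcVTX)
  -- energy and dissipation functionals
  set Efun : ℝ → ℝ := fun s => ∫ x in (0:ℝ)..1, ef (s, x) with hEfundef
  set Dfun : ℝ → ℝ := fun s => ∫ x in (0:ℝ)..1, df (s, x) with hDfundef
  have hEderiv : ∀ s : ℝ, HasDerivAt Efun (∫ x in (0:ℝ)..1, etf (s, x)) s := by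
    intro s
    refine hasDerivAt_param_integral ef etf hce hcet ?_ s
    intro p
    have h1 : HasDerivAt (fun r => 1/2 * Complex.normSq (pdX Ψ (r, p.2)))
        (1/2 * (2 * ((starRingEnd ℂ) (pdX Ψ p) * pdT (pdX Ψ) p).re)) p.1 := by
      have := (sliceT (pdX Ψ) hXd p.1 p.2).normSq'
      simpa using this.const_mul (1/2 : ℝ)
    have h2 : HasDerivAt (fun r => f (Complex.normSq (Ψ (r, p.2))))
        (deriv f (Complex.normSq (Ψ p)) * ρt p) p.1 := by
      have hin := (sliceT Ψ hΨd p.1 p.2).normSq'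
      have hout := ((hf.differentiable two_ne_zero) (Complex.normSq (Ψ p))).hasDerivAt
      have := hout.comp p.1 (by simpa using hin)
      simpa [hρtdef, Function.comp_def] using this
    have h3 : HasDerivAt (fun r => 1/2 * pdX Vf (r, p.2) ^ 2)
        (pdX Vf p * pdT (pdX Vf) p) p.1 := by
      have : HasDerivAt (fun r => 1/2 * pdX Vf (r, p.2) ^ 2) _ p.1 :=
        ((sliceT (pdX Vf) hVXd p.1 p.2).pow 2).const_mul (1/2 : ℝ)
      convert this using 1
      push_cast
      ring
    have H : HasDerivAt (fun r => 1/2 * Complex.normSq (pdX Ψ (r, p.2))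
        + f (Complex.normSq (Ψ (r, p.2))) + 1/2 * pdX Vf (r, p.2) ^ 2) _ p.1 := (h1.add h2).add h3
    convert H using 1
    simp [hetfdef]
    try ring
  have hDcont : Continuous Dfun := continuous_param_integral df hcd
  have hIntD : ∀ s : ℝ, HasDerivAt (fun u => ∫ r in (0:ℝ)..u, Dfun r) (Dfun s) s :=
    fun s => intervalIntegral.integral_hasDerivAt_right (hDcont.intervalIntegrable _ _)
      (hDcont.stronglyMeasurableAtFilter _ _) hDcont.continuousAt
  -- S is spatially periodic on [0,T)
  have hSper : ∀ s ∈ Set.Ico (0:ℝ) T, ∀ x : ℝ, Sf (s, x + 1) = Sf (s, x) := by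
    intro s hs x
    have h1 := heq' s hs x
    have h2 := heq' s hs (x + 1)
    rw [hperXX, hperT, hΨper, hVfper] at h2
    have hτc : (1/τ : ℂ) ≠ 0 := by
      simp only [ne_eq, one_div, inv_eq_zero, Complex.ofReal_eq_zero]
      exact ne_of_gt hτ
    have h3 : (((Sf (s, x + 1) : ℝ) : ℂ) - ((Sf (s, x) : ℝ) : ℂ)) * (Ψ (s, x) * (2/τ : ℂ)) = 0 := by
      linear_combination h1 - h2
    have hτc2 : (2/τ : ℂ) ≠ 0 := by
      simp only [ne_eq, div_eq_zero_iff, Complex.ofReal_eq_zero, OfNat.ofNat_ne_zero,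
        false_or]
      exact ne_of_gt hτ
    rcases mul_eq_zero.mp h3 with h4 | h4
    · have : ((Sf (s, x + 1) - Sf (s, x) : ℝ) : ℂ) = 0 := by push_cast; linear_combination h4
      have := Complex.ofReal_eq_zero.mp this
      linarith
    · rcases mul_eq_zero.mp h4 with h5 | h5
      · exact absurd h5 (hne _)
      · exact absurd h5 hτc2
  -- integration by parts for the potential term
  have byparts : ∀ a ∈ Set.Ico (0:ℝ) T, ∀ b : ℝ,
      ∫ x in (0:ℝ)..1, Vf (b, x) * (Complex.normSq (Ψ (a, x)) - Cfun x)
        = ∫ x in (0:ℝ)..1, pdX Vf (b, x) * pdX Vf (a, x) := by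
    intro a ha b
    have hder : ∀ x : ℝ, HasDerivAt (fun y => Vf (b, y) * pdX Vf (a, y))
        (pdX Vf (b, x) * pdX Vf (a, x) + Vf (b, x) * pdX (pdX Vf) (a, x)) x :=
      fun x => (sliceX Vf hVd b x).mul (sliceX (pdX Vf) hVXd a x)
    have hcont : Continuous (fun x => pdX Vf (b, x) * pdX Vf (a, x)
        + Vf (b, x) * pdX (pdX Vf) (a, x)) := by
      apply Continuous.add
      · exact ((hcVX.comp (continuous_const.prodMk continuous_id)).mul
          (hcVX.comp (continuous_const.prodMk continuous_id)))
      · exact ((hcV.comp (continuous_const.prodMk continuous_id)).mul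
          (hcVXX.comp (continuous_const.prodMk continuous_id)))
    have hper : Vf (b, 1) * pdX Vf (a, 1) = Vf (b, 0) * pdX Vf (a, 0) := by
      have h01 : (1:ℝ) = 0 + 1 := by norm_num
      rw [h01, hVfper, hperVX]
    have hzero := integral_deriv_eq_zero _ _ hder hcont hper
    have hrw : ∀ x ∈ Set.uIcc (0:ℝ) 1,
        pdX Vf (b, x) * pdX Vf (a, x) + Vf (b, x) * pdX (pdX Vf) (a, x)
          = pdX Vf (b, x) * pdX Vf (a, x) - Vf (b, x) * (Complex.normSq (Ψ (a, x)) - Cfun x) := by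
      intro x _
      rw [hPoisson' a ha x]
      ring
    rw [intervalIntegral.integral_congr hrw] at hzero
    have hi1 : IntervalIntegrable (fun x => pdX Vf (b, x) * pdX Vf (a, x)) volume 0 1 :=
      (((hcVX.comp (continuous_const.prodMk continuous_id)).mul
        (hcVX.comp (continuous_const.prodMk continuous_id)))).intervalIntegrable 0 1
    have hi2 : IntervalIntegrable (fun x => Vf (b, x) * (Complex.normSq (Ψ (a, x)) - Cfun x))
        volume 0 1 :=
      ((hcV.comp (continuous_const.prodMk continuous_id)).mul
        (((Complex.continuous_normSq.comp hcΨ).comp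
          (continuous_const.prodMk continuous_id)).sub hC)).intervalIntegrable 0 1
    rw [intervalIntegral.integral_sub hi1 hi2] at hzero
    linarith
  -- the symmetry identity ∫ (ρ - C) ∂ₜV = ∫ V ∂ₜρ
  have hsymEq : ∀ s ∈ Set.Ico (0:ℝ) T,
      (∫ x in (0:ℝ)..1, (Complex.normSq (Ψ (s, x)) - Cfun x) * pdT Vf (s, x))
        = ∫ x in (0:ℝ)..1, Vf (s, x) * ρt (s, x) := by
    intro s hs
    set A : ℝ → ℝ := fun r => ∫ x in (0:ℝ)..1, Vf (s, x) * (Complex.normSq (Ψ (r, x)) - Cfun x)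
      with hAdef
    set B : ℝ → ℝ := fun r => ∫ x in (0:ℝ)..1, Vf (r, x) * (Complex.normSq (Ψ (s, x)) - Cfun x)
      with hBdef
    have hA : HasDerivAt A (∫ x in (0:ℝ)..1, Vf (s, x) * ρt (s, x)) s := by
      refine hasDerivAt_param_integral
        (fun p => Vf (s, p.2) * (Complex.normSq (Ψ p) - Cfun p.2))
        (fun p => Vf (s, p.2) * ρt p) ?_ ?_ ?_ s
      · exact (hcV.comp (continuous_const.prodMk continuous_snd)).mul
          ((Complex.continuous_normSq.comp hcΨ).sub (hC.comp continuous_snd))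
      · exact (hcV.comp (continuous_const.prodMk continuous_snd)).mul hcρt
      · intro p
        have := ((sliceT Ψ hΨd p.1 p.2).normSq'.sub_const (Cfun p.2)).const_mul (Vf (s, p.2))
        simpa [hρtdef] using this
    have hB : HasDerivAt B (∫ x in (0:ℝ)..1, pdT Vf (s, x) * (Complex.normSq (Ψ (s, x)) - Cfun x)) s := by
      refine hasDerivAt_param_integral
        (fun p => Vf p * (Complex.normSq (Ψ (s, p.2)) - Cfun p.2))
        (fun p => pdT Vf p * (Complex.normSq (Ψ (s, p.2)) - Cfun p.2)) ?_ ?_ ?_ s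
      · exact hcV.mul (((Complex.continuous_normSq.comp hcΨ).comp
          (continuous_const.prodMk continuous_snd)).sub (hC.comp continuous_snd))
      · exact hcVT.mul (((Complex.continuous_normSq.comp hcΨ).comp
          (continuous_const.prodMk continuous_snd)).sub (hC.comp continuous_snd))
      · intro p
        have := (sliceT Vf hVd p.1 p.2).mul_const (Complex.normSq (Ψ (s, p.2)) - Cfun p.2)
        simpa using this
    have hAB : ∀ r ∈ Set.Ico (0:ℝ) T, A r = B r := by
      intro r hr
      rw [hAdef, hBdef]
      simp only
      rw [byparts r hr s, byparts s hs r]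
      apply intervalIntegral.integral_congr
      intro x _
      ring
    have hmem : Set.Ico (0:ℝ) T ∈ nhdsWithin s (Set.Ici s) := by
      apply mem_nhdsWithin.mpr
      exact ⟨Set.Iio T, isOpen_Iio, hs.2, fun y hy => ⟨le_trans hs.1 hy.2, hy.1⟩⟩
    have hAe : B =ᶠ[nhdsWithin s (Set.Ici s)] A :=
      Filter.eventuallyEq_of_mem hmem (fun r hr => (hAB r hr).symm)
    have h3 : HasDerivWithinAt B (∫ x in (0:ℝ)..1, Vf (s, x) * ρt (s, x)) (Set.Ici s) s :=
      (hA.hasDerivWithinAt).congr_of_eventuallyEq hAe (hAB s hs).symm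
    have h4 := h3.derivWithin (uniqueDiffOn_Ici s s Set.self_mem_Ici)
    have h5 := (hB.hasDerivWithinAt).derivWithin (uniqueDiffOn_Ici s s Set.self_mem_Ici)
    have h6 : (∫ x in (0:ℝ)..1, pdT Vf (s, x) * (Complex.normSq (Ψ (s, x)) - Cfun x))
        = ∫ x in (0:ℝ)..1, Vf (s, x) * ρt (s, x) := by rw [← h4, ← h5]
    rw [← h6]
    apply intervalIntegral.integral_congr
    intro x _
    ring
  -- the core energy identity:  d/ds E = -(1/τ) D  on [0,T)
  have hkey : ∀ s ∈ Set.Ico (0:ℝ) T,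
      (∫ x in (0:ℝ)..1, etf (s, x)) = -(1/τ) * Dfun s := by
    intro s hs
    have cs : Continuous (fun x : ℝ => ((s, x) : ℝ × ℝ)) :=
      continuous_const.prodMk continuous_id
    set dG : ℝ → ℝ := fun x =>
      (((starRingEnd ℂ) (pdX (pdX Ψ) (s, x)) * pdT Ψ (s, x)).re
        + ((starRingEnd ℂ) (pdX Ψ (s, x)) * pdX (pdT Ψ) (s, x)).re)
      + (1/τ) * (pdX Sf (s, x) * Jf (s, x)
        + Sf (s, x) * (((starRingEnd ℂ) (pdX Ψ (s, x)) * pdX Ψ (s, x)).im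
          + ((starRingEnd ℂ) (Ψ (s, x)) * pdX (pdX Ψ) (s, x)).im))
      + (pdX (pdX Vf) (s, x) * pdT Vf (s, x) + pdX Vf (s, x) * pdX (pdT Vf) (s, x)) with hdGdef
    have hGder : ∀ x : ℝ, HasDerivAt (fun y =>
        ((starRingEnd ℂ) (pdX Ψ (s, y)) * pdT Ψ (s, y)).re
        + (1/τ) * (Sf (s, y) * Jf (s, y))
        + pdX Vf (s, y) * pdT Vf (s, y)) (dG x) x := by
      intro x
      have hd1 := (sliceX (pdX Ψ) hXd s x).conj_mul_re (sliceX (pdT Ψ) hTd s x)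
      have hd2 := (sliceX Sf hSd s x).mul
        ((sliceX Ψ hΨd s x).conj_mul_im (sliceX (pdX Ψ) hXd s x))
      have hd3 := (sliceX (pdX Vf) hVXd s x).mul (sliceX (pdT Vf) hVTd s x)
      exact (hd1.add (hd2.const_mul (1/τ))).add hd3
    have hGcont : Continuous dG := by
      refine Continuous.add (Continuous.add ?_ ?_) ?_
      · exact (Complex.continuous_re.comp ((hconj.comp (hcXX.comp cs)).mul (hcT.comp cs))).add
          (Complex.continuous_re.comp ((hconj.comp (hcX.comp cs)).mul (hcXT.comp cs)))
      · exact continuous_const.mul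
          (((hcSX.comp cs).mul (hcJ.comp cs)).add ((hcS.comp cs).mul
            ((Complex.continuous_im.comp ((hconj.comp (hcX.comp cs)).mul (hcX.comp cs))).add
              (Complex.continuous_im.comp ((hconj.comp (hcΨ.comp cs)).mul (hcXX.comp cs))))))
      · exact ((hcVXX.comp cs).mul (hcVT.comp cs)).add ((hcVX.comp cs).mul (hcVXT.comp cs))
    have hGper : ((starRingEnd ℂ) (pdX Ψ (s, (1:ℝ))) * pdT Ψ (s, 1)).re
          + (1/τ) * (Sf (s, 1) * Jf (s, 1)) + pdX Vf (s, 1) * pdT Vf (s, 1)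
        = ((starRingEnd ℂ) (pdX Ψ (s, (0:ℝ))) * pdT Ψ (s, 0)).re
          + (1/τ) * (Sf (s, 0) * Jf (s, 0)) + pdX Vf (s, 0) * pdT Vf (s, 0) := by
      have h01 : (1:ℝ) = 0 + 1 := by norm_num
      have hJper : ∀ y : ℝ, Jf (s, y + 1) = Jf (s, y) := by
        intro y
        simp only [hJfdef]
        rw [hΨper, hperX]
      rw [h01, hperX, hperT, hSper s hs, hJper, hperVX, hperVT]
    have hGzero : ∫ x in (0:ℝ)..1, dG x = 0 :=
      integral_deriv_eq_zero _ dG hGder hGcont hGper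
    -- pointwise decomposition of the energy density derivative
    have hpt : ∀ x : ℝ, etf (s, x) = dG x + (-(1/τ) * df (s, x)
        + ((Complex.normSq (Ψ (s, x)) - Cfun x) * pdT Vf (s, x)
          - Vf (s, x) * ρt (s, x))) := by
      intro x
      have hc := heq' s hs x
      have hcl1 : pdT (pdX Ψ) (s, x) = pdX (pdT Ψ) (s, x) := clairaut Ψ hΨ2 _
      have hcl2 : pdT (pdX Vf) (s, x) = pdX (pdT Vf) (s, x) := clairaut Vf hV2 _
      have hpo := hPoisson' s hs x
      have hsx' : pdX Sf (s, x) = vf (s, x) := hSx s hs x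
      have hJv : Jf (s, x) = Complex.normSq (Ψ (s, x)) * vf (s, x) := by
        show ((starRingEnd ℂ) (Ψ (s, x)) * pdX Ψ (s, x)).im
            = Complex.normSq (Ψ (s, x)) * (pdX Ψ (s, x) / Ψ (s, x)).im
        rw [Complex.div_im, Complex.mul_im]
        field_simp [hnsq (s, x)]
        try simp [Complex.normSq_apply]
        try ring
      simp only [hetfdef, hdGdef, hdfdef, hρtdef]
      rw [hcl1, hcl2, hpo, hsx', hJv]
      rw [show (1/(τ:ℂ)) = ((1/τ : ℝ) : ℂ) from by push_cast; ring] at hc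
      rw [hc]
      simp [Complex.mul_re, Complex.mul_im, Complex.add_re, Complex.add_im, Complex.sub_re,
        Complex.sub_im, Complex.normSq_apply, Complex.conj_re, Complex.conj_im,
        Complex.I_re, Complex.I_im, Complex.ofReal_re, Complex.ofReal_im]
      try ring
    -- assemble the integral identity
    have hrest1 : Continuous (fun x => -(1/τ) * df (s, x)) :=
      continuous_const.mul (hcd.comp cs)
    have hrest2 : Continuous (fun x => (Complex.normSq (Ψ (s, x)) - Cfun x) * pdT Vf (s, x)
        - Vf (s, x) * ρt (s, x)) :=
      ((((Complex.continuous_normSq.comp hcΨ).comp cs).sub hC).mul (hcVT.comp cs)).sub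
        ((hcV.comp cs).mul (hcρt.comp cs))
    have step1 : (∫ x in (0:ℝ)..1, etf (s, x))
        = ∫ x in (0:ℝ)..1, (dG x + (-(1/τ) * df (s, x)
          + ((Complex.normSq (Ψ (s, x)) - Cfun x) * pdT Vf (s, x)
            - Vf (s, x) * ρt (s, x)))) :=
      intervalIntegral.integral_congr (fun x _ => hpt x)
    rw [step1, intervalIntegral.integral_add (g := fun x => -(1/τ) * df (s, x)
        + ((Complex.normSq (Ψ (s, x)) - Cfun x) * pdT Vf (s, x) - Vf (s, x) * ρt (s, x)))
      (hGcont.intervalIntegrable 0 1)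
      ((hrest1.add hrest2).intervalIntegrable 0 1), hGzero, zero_add,
      intervalIntegral.integral_add (hrest1.intervalIntegrable 0 1)
        (hrest2.intervalIntegrable 0 1)]
    have hsub : (∫ x in (0:ℝ)..1, ((Complex.normSq (Ψ (s, x)) - Cfun x) * pdT Vf (s, x)
        - Vf (s, x) * ρt (s, x))) = 0 := by
      have hcg1 : Continuous (fun x => (Complex.normSq (Ψ (s, x)) - Cfun x) * pdT Vf (s, x)) :=
        (((Complex.continuous_normSq.comp hcΨ).comp cs).sub hC).mul (hcVT.comp cs)
      have hcg2 : Continuous (fun x => Vf (s, x) * ρt (s, x)) :=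
        (hcV.comp cs).mul (hcρt.comp cs)
      rw [intervalIntegral.integral_sub (hcg1.intervalIntegrable 0 1)
        (hcg2.intervalIntegrable 0 1)]
      rw [hsymEq s hs, sub_self]
    rw [hsub, add_zero]
    have : (fun x => -(1/τ) * df (s, x)) = fun x => -(1/τ * df (s, x)) := by
      funext x; ring
    rw [this, intervalIntegral.integral_neg, intervalIntegral.integral_const_mul]
    show -(1/τ * Dfun s) = -(1/τ) * Dfun s
    ring
  -- conclusion via constancy of the total energy
  intro t ht
  set Gt : ℝ → ℝ := fun r => Efun r + (1/τ) * ∫ q in (0:ℝ)..r, Dfun q with hGtdef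
  have hGtder : ∀ u ∈ Set.Ico (0:ℝ) T, HasDerivAt Gt 0 u := by
    intro u hu
    have h1 : HasDerivAt Efun (-(1/τ) * Dfun u) u := by
      rw [← hkey u hu]; exact hEderiv u
    have h2 := (hIntD u).const_mul (1/τ)
    have h3 : HasDerivAt (fun r => Efun r + (1/τ) * ∫ q in (0:ℝ)..r, Dfun q) _ u := h1.add h2
    convert h3 using 1
    ring
  have hconst := constant_of_has_deriv_right_zero (f := Gt) (a := 0) (b := t)
    (fun u hu => (hGtder u ⟨hu.1, lt_of_le_of_lt hu.2 ht.2⟩).continuousAt.continuousWithinAt)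
    (fun u hu => (hGtder u ⟨hu.1, lt_trans hu.2 ht.2⟩).hasDerivWithinAt)
  have hGt0 : Gt t = Gt 0 := hconst t (Set.right_mem_Icc.mpr ht.1)
  have final : Efun t + (1/τ) * (∫ q in (0:ℝ)..t, Dfun q) = Efun 0 := by
    rw [hGtdef] at hGt0
    simpa using hGt0
  simp only [hDx, hDVx, Complex.sq_norm]
  exact final
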